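/- Let G be a group, let a, b ∈ G, and let α, β be real numbers with α > 0, β > 0 and 2(α+β) = 1. In the group algebra ℝ[G], set μ₁₁ = α(b + b⁻¹), μ₁₂ = β(1 + a), μ₂₁ = β(1 + a⁻¹), μ₂₂ = 2α·1. Then the geometric series ∑_{n≥0} μ₂₂ⁿ converges to (2β)⁻¹·1 and μ₁₁ + μ₁₂ (∑_{n≥0} μ₂₂ⁿ) μ₂₁ = β·1 + (β/2)(a + a⁻¹) + α(b + b⁻¹). If moreover 2α² = β², then this element equals β·1 + (1−β)·μ, where μ = α(a + a⁻¹) + β(b + b⁻¹); that is, the measure μ is self-similar: the induced measure is the convex combination β·δ_e + (1−β)·μ. -/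

import Mathlib

/-- The Schur-complement computation for the Basilica random walk in the group algebra
`ℝ[G]`: with `μ₁₁ = α(b+b⁻¹)`, `μ₁₂ = β(1+a)`, `μ₂₁ = β(1+a⁻¹)`, `μ₂₂ = 2α·1`, the
geometric series `∑ μ₂₂ⁿ` converges (coefficientwise) to `(2β)⁻¹·1`,
`μ₁₁ + μ₁₂ (∑ μ₂₂ⁿ) μ₂₁ = β·1 + (β/2)(a+a⁻¹) + α(b+b⁻¹)`, and if `2α² = β²` this equals
`β·1 + (1−β)μ` for `μ = α(a+a⁻¹) + β(b+b⁻¹)`: the measure `μ` is self-similar. -/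
theorem basilica_schur_complement_self_similar
    {G : Type*} [Group G] (a b : G) (α β : ℝ)
    (hα : 0 < α) (hβ : 0 < β) (hprob : 2 * (α + β) = 1) :
    (∀ g : G,
      HasSum (fun n : ℕ => (((2 * α) • (1 : MonoidAlgebra ℝ G)) ^ n).coeff g)
        (((2 * β)⁻¹ • (1 : MonoidAlgebra ℝ G)).coeff g)) ∧
    α • (MonoidAlgebra.of ℝ G b + MonoidAlgebra.of ℝ G b⁻¹)
        + (β • (1 + MonoidAlgebra.of ℝ G a)) * ((2 * β)⁻¹ • (1 : MonoidAlgebra ℝ G))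
          * (β • (1 + MonoidAlgebra.of ℝ G a⁻¹))
      = β • (1 : MonoidAlgebra ℝ G)
        + (β / 2) • (MonoidAlgebra.of ℝ G a + MonoidAlgebra.of ℝ G a⁻¹)
        + α • (MonoidAlgebra.of ℝ G b + MonoidAlgebra.of ℝ G b⁻¹) ∧
    (2 * α ^ 2 = β ^ 2 →
      α • (MonoidAlgebra.of ℝ G b + MonoidAlgebra.of ℝ G b⁻¹)
          + (β • (1 + MonoidAlgebra.of ℝ G a)) * ((2 * β)⁻¹ • (1 : MonoidAlgebra ℝ G))
            * (β • (1 + MonoidAlgebra.of ℝ G a⁻¹))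
        = β • (1 : MonoidAlgebra ℝ G)
          + (1 - β) • (α • (MonoidAlgebra.of ℝ G a + MonoidAlgebra.of ℝ G a⁻¹)
            + β • (MonoidAlgebra.of ℝ G b + MonoidAlgebra.of ℝ G b⁻¹))) := by
  have hx : MonoidAlgebra.of ℝ G a * MonoidAlgebra.of ℝ G a⁻¹ = 1 := by
    rw [← map_mul, mul_inv_cancel, map_one]
  set x := MonoidAlgebra.of ℝ G a
  set y := MonoidAlgebra.of ℝ G a⁻¹
  set u := MonoidAlgebra.of ℝ G b
  set v := MonoidAlgebra.of ℝ G b⁻¹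
  have hb : β ≠ 0 := ne_of_gt hβ
  have hmid : (β • (1 + x)) * ((2 * β)⁻¹ • (1 : MonoidAlgebra ℝ G))
      * (β • (1 + y)) = β • (1 : MonoidAlgebra ℝ G) + (β / 2) • (x + y) := by
    have hexp : (1 + x) * 1 * (1 + y) = (1 : MonoidAlgebra ℝ G) + 1 + (x + y) := by
      simp only [one_mul, mul_add, add_mul, mul_one, hx]
      abel
    rw [smul_mul_smul_comm, smul_mul_smul_comm, hexp]
    have hc : β * (2 * β)⁻¹ * β = β / 2 := by field_simp
    rw [hc]
    module
  have h2 : α • (u + v) + (β • (1 + x)) * ((2 * β)⁻¹ • (1 : MonoidAlgebra ℝ G))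
      * (β • (1 + y))
      = β • (1 : MonoidAlgebra ℝ G) + (β / 2) • (x + y) + α • (u + v) := by
    rw [hmid]; abel
  refine ⟨?_, h2, ?_⟩
  · intro g
    have hlt : |2 * α| < 1 := by
      rw [abs_of_pos (by linarith)]
      linarith
    have hg := hasSum_geometric_of_abs_lt_one hlt
    have hsum : (1 - 2 * α)⁻¹ = (2 * β)⁻¹ := by
      congr 1; linarith
    rw [hsum] at hg
    have hpow : ∀ n : ℕ, (((2 * α) • (1 : MonoidAlgebra ℝ G)) ^ n).coeff g
        = (2 * α) ^ n * (1 : MonoidAlgebra ℝ G).coeff g := by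
      intro n
      rw [smul_pow, one_pow]
      rfl
    simp_rw [hpow]
    have hr : ((2 * β)⁻¹ • (1 : MonoidAlgebra ℝ G)).coeff g
        = (2 * β)⁻¹ * (1 : MonoidAlgebra ℝ G).coeff g := rfl
    rw [hr]
    exact hg.mul_right _
  · intro hsq
    rw [h2]
    have e1 : β / 2 = (1 - β) * α := by nlinarith
    have e2 : α = (1 - β) * β := by nlinarith
    rw [e1, e2]
    module
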